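/- For c ∈ (0,1), with u₃(x) = √(1−c²)·sech(√(1−c²)·x) and θ(x) = arctan(sinh(√(1−c²)·x)/c), the momentum p = ∫_ℝ u₃(x)·θ'(x) dx equals 2·arctan(√(1−c²)/c). -/

import Mathlib

open MeasureTheory Filter

lemma tanh_tendsto_atTop : Filter.Tendsto Real.tanh Filter.atTop (nhds 1) := by
  have h : ∀ x : ℝ, Real.tanh x = (1 - Real.exp (-(2*x))) / (1 + Real.exp (-(2*x))) := by
    intro x
    rw [Real.tanh_eq_sinh_div_cosh, Real.sinh_eq, Real.cosh_eq]
    have e1 : Real.exp (-(2*x)) = Real.exp (-x) * Real.exp (-x) := by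
      rw [← Real.exp_add]; ring_nf
    have e2 : Real.exp x * Real.exp (-x) = 1 := by
      rw [← Real.exp_add]; simp
    have h2 : (1 : ℝ) + Real.exp (-(2*x)) ≠ 0 := by positivity
    have h3 : (0:ℝ) < Real.exp x + Real.exp (-x) := by positivity
    have h4 : (Real.exp x - Real.exp (-x)) / 2 / ((Real.exp x + Real.exp (-x)) / 2)
        = (Real.exp x - Real.exp (-x)) / (Real.exp x + Real.exp (-x)) := by
      field_simp
    rw [h4, div_eq_div_iff h3.ne' h2, e1]
    nlinarith [e2, Real.exp_pos (-x)]
  have h2x : Filter.Tendsto (fun x : ℝ => 2*x) Filter.atTop Filter.atTop :=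
    Filter.tendsto_id.const_mul_atTop two_pos
  have hneg : Filter.Tendsto (fun x : ℝ => -(2*x)) Filter.atTop Filter.atBot :=
    Filter.tendsto_neg_atTop_atBot.comp h2x
  have hexp : Filter.Tendsto (fun x : ℝ => Real.exp (-(2*x))) Filter.atTop (nhds 0) :=
    Real.tendsto_exp_atBot.comp hneg
  have hlim : Filter.Tendsto (fun x : ℝ => (1 - Real.exp (-(2*x))) / (1 + Real.exp (-(2*x))))
      Filter.atTop (nhds ((1 - 0) / (1 + 0))) :=
    ((tendsto_const_nhds.sub hexp).div (tendsto_const_nhds.add hexp) (by norm_num))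
  norm_num at hlim
  exact hlim.congr (fun x => (h x).symm)

lemma tanh_tendsto_atBot : Filter.Tendsto Real.tanh Filter.atBot (nhds (-1)) := by
  have hneg : Filter.Tendsto (fun x : ℝ => -x) Filter.atBot Filter.atTop :=
    Filter.tendsto_neg_atBot_atTop
  have h := tanh_tendsto_atTop.comp hneg
  have heq : (Real.tanh ∘ fun x : ℝ => -x) = fun x => -Real.tanh x := by
    funext x; simp [Function.comp, Real.tanh_neg]
  rw [heq] at h
  simpa using h.neg

/-- For c ∈ (0,1), the momentum p = ∫_ℝ u₃ θ' equals 2 arctan(√(1−c²)/c). -/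
theorem stmt9 (c : ℝ) (hc : c ∈ Set.Ioo (0:ℝ) 1)
    (u₃ θ : ℝ → ℝ)
    (hu₃ : ∀ x, u₃ x = Real.sqrt (1 - c^2) * (1 / Real.cosh (Real.sqrt (1 - c^2) * x)))
    (hθ : ∀ x, θ x = Real.arctan (Real.sinh (Real.sqrt (1 - c^2) * x) / c)) :
    ∫ x : ℝ, u₃ x * deriv θ x = 2 * Real.arctan (Real.sqrt (1 - c^2) / c) := by
  obtain ⟨hc0, hc1⟩ := hc
  set a := Real.sqrt (1 - c^2) with ha_def
  have h1c : (0:ℝ) < 1 - c^2 := by nlinarith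
  have ha : 0 < a := Real.sqrt_pos.2 h1c
  have ha2 : a^2 = 1 - c^2 := Real.sq_sqrt h1c.le
  set g : ℝ → ℝ := fun x => a^2 * c / (c^2 + Real.sinh (a*x)^2) with hg_def
  set F : ℝ → ℝ := fun x => Real.arctan (a/c * Real.tanh (a*x)) with hF_def
  -- derivative of θ
  have hθderiv : ∀ x, deriv θ x = a * Real.cosh (a*x) / c / (1 + (Real.sinh (a*x)/c)^2) := by
    intro x
    have h0 : HasDerivAt (fun y : ℝ => a * y) a x := by
      simpa using (hasDerivAt_id x).const_mul a
    have h1 : HasDerivAt (fun y => Real.sinh (a*y) / c)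
        (Real.cosh (a*x) * a / c) x :=
      (((Real.hasDerivAt_sinh (a*x)).comp x h0)).div_const c
    have h2 : HasDerivAt θ ((1 / (1 + (Real.sinh (a*x)/c)^2)) * (Real.cosh (a*x) * a / c)) x := by
      have heq : θ = fun y => Real.arctan (Real.sinh (a*y)/c) := funext hθ
      rw [heq]
      exact (Real.hasDerivAt_arctan (Real.sinh (a*x)/c)).comp x h1
    rw [h2.deriv]; ring
  -- integrand equals g
  have hint_eq : ∀ x, u₃ x * deriv θ x = g x := by
    intro x
    rw [hu₃ x, hθderiv x, hg_def]
    have hcosh : Real.cosh (a*x) ≠ 0 := (Real.cosh_pos (a*x)).ne'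
    have hden : (0:ℝ) < c^2 + Real.sinh (a*x)^2 := by positivity
    field_simp
  -- F has derivative g
  have hF : ∀ x, HasDerivAt F (g x) x := by
    intro x
    have hcosh : Real.cosh (a*x) ≠ 0 := (Real.cosh_pos (a*x)).ne'
    have h0 : HasDerivAt (fun y : ℝ => a * y) a x := by
      simpa using (hasDerivAt_id x).const_mul a
    have hs : HasDerivAt (fun y => Real.sinh (a*y)) (Real.cosh (a*x) * a) x :=
      (Real.hasDerivAt_sinh (a*x)).comp x h0
    have hco : HasDerivAt (fun y => Real.cosh (a*y)) (Real.sinh (a*x) * a) x :=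
      (Real.hasDerivAt_cosh (a*x)).comp x h0
    have htanh0 := hs.div hco hcosh
    have heq : (fun y => Real.sinh (a*y) / Real.cosh (a*y)) = fun y => Real.tanh (a*y) := by
      funext y; rw [Real.tanh_eq_sinh_div_cosh]
    rw [show ((fun y => Real.sinh (a*y)) / fun y => Real.cosh (a*y)) = fun y => Real.tanh (a*y) from heq] at htanh0
    have htanh : HasDerivAt (fun y => Real.tanh (a*y)) (a / Real.cosh (a*x)^2) x := by
      refine htanh0.congr_deriv (Eq.symm ?_)
      have hid : Real.cosh (a*x)^2 - Real.sinh (a*x)^2 = 1 := Real.cosh_sq_sub_sinh_sq (a*x)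
      rw [div_left_inj' (pow_ne_zero 2 hcosh)]
      linear_combination (-a) * hid
    have h3 : HasDerivAt (fun y => a/c * Real.tanh (a*y)) (a/c * (a / Real.cosh (a*x)^2)) x :=
      htanh.const_mul (a/c)
    have h4 := (Real.hasDerivAt_arctan (a/c * Real.tanh (a*x))).comp x h3
    rw [hF_def]
    refine h4.congr_deriv (Eq.symm ?_)
    rw [Real.tanh_eq_sinh_div_cosh]
    have hid : Real.cosh (a*x)^2 = Real.sinh (a*x)^2 + 1 := Real.cosh_sq (a*x)
    have hs2 : (0:ℝ) < c^2 + Real.sinh (a*x)^2 := by positivity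
    rw [hg_def]
    field_simp
    linear_combination (c^2) * hid
      + (Real.sinh (a*x)^2) * ha2
  -- limits of F
  have hax_top : Filter.Tendsto (fun x : ℝ => a*x) Filter.atTop Filter.atTop :=
    Filter.tendsto_id.const_mul_atTop ha
  have hax_bot : Filter.Tendsto (fun x : ℝ => a*x) Filter.atBot Filter.atBot :=
    Filter.tendsto_id.const_mul_atBot ha
  have hta : Filter.Tendsto (fun x : ℝ => Real.tanh (a*x)) Filter.atTop (nhds 1) :=
    tanh_tendsto_atTop.comp hax_top
  have htb : Filter.Tendsto (fun x : ℝ => Real.tanh (a*x)) Filter.atBot (nhds (-1)) :=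
    tanh_tendsto_atBot.comp hax_bot
  have hFtop : Filter.Tendsto F Filter.atTop (nhds (Real.arctan (a/c))) := by
    have h1 : Filter.Tendsto (fun x : ℝ => a/c * Real.tanh (a*x)) Filter.atTop (nhds (a/c * 1)) :=
      hta.const_mul (a/c)
    rw [mul_one] at h1
    exact (Real.continuous_arctan.tendsto _).comp h1
  have hFbot : Filter.Tendsto F Filter.atBot (nhds (-Real.arctan (a/c))) := by
    have h1 : Filter.Tendsto (fun x : ℝ => a/c * Real.tanh (a*x)) Filter.atBot
        (nhds (a/c * (-1))) := htb.const_mul (a/c)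
    have h' : a/c * (-1) = -(a/c) := by ring
    rw [h'] at h1
    have h2 := (Real.continuous_arctan.tendsto _).comp h1
    rw [Real.arctan_neg] at h2
    exact h2
  -- integrability of g
  have hg_nonneg : ∀ x, 0 ≤ g x := fun x => by
    have : (0:ℝ) < c^2 + Real.sinh (a*x)^2 := by positivity
    positivity
  have hg_int_Ioi : IntegrableOn g (Set.Ioi 0) :=
    integrableOn_Ioi_deriv_of_nonneg' (fun x _ => hF x) (fun x _ => hg_nonneg x) hFtop
  have hg_cont : Continuous g := by
    apply Continuous.div continuous_const
    · exact continuous_const.add ((Real.continuous_sinh.comp (continuous_const.mul continuous_id)).pow 2)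
    · intro x
      have : (0:ℝ) < c^2 + Real.sinh (a*x)^2 := by positivity
      exact this.ne'
  have hg_int_Iic : IntegrableOn g (Set.Iic 0) := by
    have hIci : IntegrableOn g (Set.Ici 0) := by
      rwa [integrableOn_Ici_iff_integrableOn_Ioi]
    have hpre : ((fun x : ℝ => -x) ⁻¹' Set.Ici (0:ℝ)) = Set.Iic 0 := by
      ext y; simp
    have hmp : MeasurePreserving (fun x : ℝ => -x) (volume.restrict (Set.Iic (0:ℝ)))
        (volume.restrict (Set.Ici 0)) := by
      have h := (Measure.measurePreserving_neg (volume : Measure ℝ)).restrict_preimage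
        (measurableSet_Ici (a := (0:ℝ)))
      rwa [show (Neg.neg ⁻¹' Set.Ici (0:ℝ)) = Set.Iic 0 from hpre] at h
    have hcomp : Integrable (g ∘ fun x : ℝ => -x) (volume.restrict (Set.Iic 0)) :=
      hmp.integrable_comp hg_cont.aestronglyMeasurable |>.2 hIci
    have hgeven : (g ∘ fun x : ℝ => -x) = g := by
      funext y; simp only [Function.comp, hg_def, mul_neg, Real.sinh_neg]; ring_nf
    rwa [hgeven] at hcomp
  have hg_int : Integrable g := by
    rw [← integrableOn_univ, ← Set.Iic_union_Ioi (a := (0:ℝ))]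
    exact hg_int_Iic.union hg_int_Ioi
  calc ∫ x : ℝ, u₃ x * deriv θ x = ∫ x : ℝ, g x := by
        congr 1; funext x; exact hint_eq x
    _ = Real.arctan (a/c) - (-Real.arctan (a/c)) :=
        integral_of_hasDerivAt_of_tendsto hF hg_int hFbot hFtop
    _ = 2 * Real.arctan (a/c) := by ring
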